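/- (Carryover relaxation, ℓ = 1) For T ≥ 2, the function g(ω) = Σ_{j=1}^{2}[Σ_{t=j}^{T−2+j} ω_t² − (1/(T−1))(Σ_{t=j}^{T−2+j} ω_t)² + Σ_{t=1}^{T−2+j} (2(T−2+2j−2t)/(T−1)) ω_t] over {ω ∈ ℝ^T : −1 ≤ ω_t ≤ 1, ω_t ≤ ω_{t+1}} is minimized at ω*_t = −1 + 2(t−1)/(T−1). -/

import Mathlib

open Finset

/-- The convex relaxation of the trace-optimal design objective with a one-period
carryover effect (`ℓ = 1`):
`g(ω) = Σ_{j=1}^{2}[Σ_{t=j}^{T−2+j} ω_t² − (1/(T−1))(Σ_{t=j}^{T−2+j} ω_t)²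
  + Σ_{t=1}^{T−2+j} (2(T−2+2j−2t)/(T−1)) ω_t]`,
with time `t = t.val + 1` for `t : Fin T`. -/
noncomputable def gCarry1 (T : ℕ) (ω : Fin T → ℝ) : ℝ :=
  ∑ j ∈ Finset.Icc (1 : ℕ) 2,
    ((∑ t ∈ Finset.univ.filter
        (fun t : Fin T => j ≤ (t : ℕ) + 1 ∧ (t : ℕ) + 1 ≤ T - 2 + j), ω t ^ 2)
      - (1 / ((T : ℝ) - 1)) * (∑ t ∈ Finset.univ.filter
        (fun t : Fin T => j ≤ (t : ℕ) + 1 ∧ (t : ℕ) + 1 ≤ T - 2 + j), ω t) ^ 2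
      + ∑ t ∈ Finset.univ.filter (fun t : Fin T => (t : ℕ) + 1 ≤ T - 2 + j),
          (2 * ((T : ℝ) - 2 + 2 * (j : ℝ) - 2 * (((t : ℕ) : ℝ) + 1)) / ((T : ℝ) - 1))
            * ω t)

lemma sum_fin_filter_lt' {M : Type*} [AddCommMonoid M] (T m : ℕ) (f : ℕ → M) :
    ∑ t ∈ Finset.univ.filter (fun t : Fin T => (t : ℕ) < m), f (t : ℕ)
      = ∑ k ∈ Finset.range (min m T), f k := by
  rw [Finset.sum_filter, Fin.sum_univ_eq_sum_range (fun k => if k < m then f k else 0) T,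
    ← Finset.sum_filter]
  congr 1
  ext k
  simp only [Finset.mem_filter, Finset.mem_range]
  omega

/-- For `T ≥ 2`, the carryover relaxation with `ℓ = 1` is minimized over
`{−1 ≤ ω_t ≤ 1, ω monotone}` at `ω*_t = −1 + 2(t−1)/(T−1)`. -/
theorem carryover_one_lag_optimal (T : ℕ) (hT : 2 ≤ T)
    (ωstar : Fin T → ℝ) (hωstar : ∀ t, ωstar t = -1 + 2 * ((t : ℕ) : ℝ) / ((T : ℝ) - 1)) :
    ((∀ t, -1 ≤ ωstar t ∧ ωstar t ≤ 1) ∧ Monotone ωstar) ∧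
      ∀ ω : Fin T → ℝ, (∀ t, -1 ≤ ω t ∧ ω t ≤ 1) → Monotone ω →
        gCarry1 T ωstar ≤ gCarry1 T ω := by
  haveI : NeZero T := ⟨by omega⟩
  have hTR : (2:ℝ) ≤ (T:ℝ) := by exact_mod_cast hT
  have hn1 : (1:ℝ) ≤ (T:ℝ) - 1 := by linarith
  have hn0 : (0:ℝ) < (T:ℝ) - 1 := by linarith
  have hnne : (T:ℝ) - 1 ≠ 0 := ne_of_gt hn0
  constructor
  · constructor
    · intro t
      rw [hωstar t]
      have ht : ((t:ℕ):ℝ) ≤ (T:ℝ) - 1 := by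
        have := t.isLt
        have : ((t:ℕ):ℝ) ≤ (T:ℝ) - 1 ↔ ((t:ℕ):ℝ) + 1 ≤ (T:ℝ) := by constructor <;> intro <;> linarith
        rw [this]
        exact_mod_cast t.isLt
      constructor
      · have : 0 ≤ 2 * ((t:ℕ):ℝ) / ((T:ℝ) - 1) := by positivity
        linarith
      · have : 2 * ((t:ℕ):ℝ) / ((T:ℝ) - 1) ≤ 2 := by
          rw [div_le_iff₀ hn0]; linarith
        linarith
    · intro s t hst
      rw [hωstar s, hωstar t]
      have hc : ((s:ℕ):ℝ) ≤ ((t:ℕ):ℝ) := by exact_mod_cast hst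
      have h2 : 2*((s:ℕ):ℝ)/((T:ℝ)-1) ≤ 2*((t:ℕ):ℝ)/((T:ℝ)-1) := by
        exact div_le_div_of_nonneg_right (by linarith) hn0.le
      linarith
  intro ω hωb hωm
  -- filter sets
  set s1 : Finset (Fin T) := Finset.univ.filter (fun t : Fin T => (t : ℕ) < T - 1) with hs1
  set s2 : Finset (Fin T) := Finset.univ.filter (fun t : Fin T => 1 ≤ (t : ℕ)) with hs2
  -- rewrite gCarry1
  have hg : ∀ x : Fin T → ℝ, gCarry1 T x =
      ((∑ t ∈ s1, x t ^ 2) - (1 / ((T : ℝ) - 1)) * (∑ t ∈ s1, x t) ^ 2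
        + ∑ t ∈ s1, (2 * ((T : ℝ) - 2 * (((t : ℕ) : ℝ)) - 2) / ((T : ℝ) - 1)) * x t)
      + ((∑ t ∈ s2, x t ^ 2) - (1 / ((T : ℝ) - 1)) * (∑ t ∈ s2, x t) ^ 2
        + ∑ t : Fin T, (2 * ((T : ℝ) - 2 * (((t : ℕ) : ℝ))) / ((T : ℝ) - 1)) * x t) := by
    intro x
    unfold gCarry1
    rw [show Finset.Icc (1:ℕ) 2 = {1, 2} from rfl, Finset.sum_insert (by norm_num),
      Finset.sum_singleton]
    have e1 : Finset.univ.filter (fun t : Fin T => 1 ≤ (t : ℕ) + 1 ∧ (t : ℕ) + 1 ≤ T - 2 + 1) = s1 :=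
      Finset.filter_congr (fun t _ => by omega)
    have e2 : Finset.univ.filter (fun t : Fin T => 2 ≤ (t : ℕ) + 1 ∧ (t : ℕ) + 1 ≤ T - 2 + 2) = s2 :=
      Finset.filter_congr (fun t _ => by have := t.isLt; omega)
    have e3 : Finset.univ.filter (fun t : Fin T => (t : ℕ) + 1 ≤ T - 2 + 1) = s1 :=
      Finset.filter_congr (fun t _ => by omega)
    have e4 : Finset.univ.filter (fun t : Fin T => (t : ℕ) + 1 ≤ T - 2 + 2) = Finset.univ :=
      Finset.filter_true_of_mem (fun t _ => by have := t.isLt; omega)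
    rw [e1, e2, e3, e4]
    congr 1
    · congr 1
      apply Finset.sum_congr rfl
      intro t _
      push_cast
      ring
    · congr 1
      apply Finset.sum_congr rfl
      intro t _
      push_cast
      ring
  -- cardinalities
  have hcard1 : (s1.card : ℝ) = (T:ℝ) - 1 := by
    have : s1 = Finset.Iio (⟨T - 1, by omega⟩ : Fin T) := by
      ext t
      simp [hs1, Fin.lt_def]
    rw [this, Fin.card_Iio, Nat.cast_sub (by omega : 1 ≤ T)]
    norm_num
  have hcard2 : (s2.card : ℝ) = (T:ℝ) - 1 := by
    have : s2 = Finset.Ici (⟨1, by omega⟩ : Fin T) := by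
      ext t
      simp [hs2, Fin.le_def]
    rw [this, Fin.card_Ici]
    show (((T - 1 : ℕ)) : ℝ) = (T:ℝ) - 1
    rw [Nat.cast_sub (by omega : 1 ≤ T)]
    norm_num
  -- Gauss sums
  have gauss : ∀ m : ℕ, m ≤ T → ∑ k ∈ Finset.range m, ((k:ℝ)) = (m:ℝ) * ((m:ℝ) - 1) / 2 := by
    intro m hm
    induction m with
    | zero => simp
    | succ p ih =>
      rw [Finset.sum_range_succ, ih (by omega)]
      push_cast
      ring
  have hA1 : ∑ t ∈ s1, ωstar t = -1 := by
    have h1 : ∑ t ∈ s1, ωstar t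
        = ∑ t ∈ s1, (fun k : ℕ => -1 + 2 * (k:ℝ) / ((T:ℝ) - 1)) (t : ℕ) := by
      apply Finset.sum_congr rfl
      intro t _
      exact hωstar t
    rw [h1, hs1, sum_fin_filter_lt' T (T-1) (fun k : ℕ => -1 + 2 * (k:ℝ) / ((T:ℝ) - 1)),
      show min (T-1) T = T - 1 by omega]
    rw [Finset.sum_add_distrib, Finset.sum_const, Finset.card_range]
    have : ∑ k ∈ Finset.range (T-1), 2 * (k:ℝ) / ((T:ℝ) - 1)
        = (2 / ((T:ℝ) - 1)) * ∑ k ∈ Finset.range (T-1), (k:ℝ) := by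
      rw [Finset.mul_sum]
      apply Finset.sum_congr rfl
      intro k _
      ring
    rw [this, gauss (T-1) (by omega)]
    have hc : ((T - 1 : ℕ) : ℝ) = (T:ℝ) - 1 := by
      have := Nat.cast_sub (by omega : 1 ≤ T) (R := ℝ)
      simpa using this
    rw [hc]
    field_simp
    simp only [nsmul_eq_mul, smul_eq_mul, hc]
    ring
  have hsplit : ∀ f : Fin T → ℝ, ∑ t : Fin T, f t = (∑ t ∈ s2, f t) + f 0 := by
    intro f
    rw [← Finset.sum_filter_add_sum_filter_not Finset.univ (fun t : Fin T => 1 ≤ (t:ℕ)) f]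
    congr 1
    have : Finset.univ.filter (fun t : Fin T => ¬ 1 ≤ (t:ℕ)) = {0} := by
      ext t
      simp only [Finset.mem_filter, Finset.mem_univ, true_and, Finset.mem_singleton,
        Fin.ext_iff, Fin.val_zero]
      omega
    rw [this, Finset.sum_singleton]
  have hstar0 : ωstar 0 = -1 := by
    rw [hωstar 0]
    simp
  have hA2 : ∑ t ∈ s2, ωstar t = 1 := by
    have h2 : ∑ t : Fin T, ωstar t = (∑ t ∈ s2, ωstar t) + ωstar 0 := hsplit ωstar
    have h3 : ∑ t : Fin T, ωstar t = 0 := by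
      have h1 : ∑ t : Fin T, ωstar t
          = ∑ t ∈ Finset.univ.filter (fun t : Fin T => (t:ℕ) < T),
              (fun k : ℕ => -1 + 2 * (k:ℝ) / ((T:ℝ) - 1)) (t : ℕ) := by
        rw [Finset.filter_true_of_mem (fun t _ => t.isLt)]
        exact Finset.sum_congr rfl (fun t _ => hωstar t)
      rw [h1, sum_fin_filter_lt' T T (fun k : ℕ => -1 + 2 * (k:ℝ) / ((T:ℝ) - 1)), show min T T = T by omega]
      rw [Finset.sum_add_distrib, Finset.sum_const, Finset.card_range]
      have : ∑ k ∈ Finset.range T, 2 * (k:ℝ) / ((T:ℝ) - 1)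
          = (2 / ((T:ℝ) - 1)) * ∑ k ∈ Finset.range T, (k:ℝ) := by
        rw [Finset.mul_sum]
        exact Finset.sum_congr rfl (fun k _ => by ring)
      rw [this, gauss T le_rfl]
      field_simp
      ring
    rw [h2, hstar0] at h3
    linarith
  -- expansion helpers
  have expand_sq : ∀ s : Finset (Fin T),
      ∑ t ∈ s, ω t ^ 2 = ∑ t ∈ s, ωstar t ^ 2
        + 2 * ∑ t ∈ s, ωstar t * (ω t - ωstar t) + ∑ t ∈ s, (ω t - ωstar t) ^ 2 := by
    intro s
    rw [Finset.mul_sum, ← Finset.sum_add_distrib, ← Finset.sum_add_distrib]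
    exact Finset.sum_congr rfl (fun t _ => by ring)
  have expand_lin : ∀ (s : Finset (Fin T)) (c : Fin T → ℝ),
      ∑ t ∈ s, c t * ω t = ∑ t ∈ s, c t * ωstar t + ∑ t ∈ s, c t * (ω t - ωstar t) := by
    intro s c
    rw [← Finset.sum_add_distrib]
    exact Finset.sum_congr rfl (fun t _ => by ring)
  have expand_sum : ∀ s : Finset (Fin T),
      ∑ t ∈ s, ω t = ∑ t ∈ s, ωstar t + ∑ t ∈ s, (ω t - ωstar t) := by
    intro s
    rw [← Finset.sum_add_distrib]
    exact Finset.sum_congr rfl (fun t _ => by ring)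
  -- pointwise brackets vanish
  have hX1 : 2 * ∑ t ∈ s1, ωstar t * (ω t - ωstar t)
      + ∑ t ∈ s1, (2 * ((T : ℝ) - 2 * (((t : ℕ) : ℝ)) - 2) / ((T : ℝ) - 1)) * (ω t - ωstar t)
      + (2 / ((T:ℝ) - 1)) * ∑ t ∈ s1, (ω t - ωstar t) = 0 := by
    rw [Finset.mul_sum, Finset.mul_sum, ← Finset.sum_add_distrib, ← Finset.sum_add_distrib]
    apply Finset.sum_eq_zero
    intro t _
    rw [hωstar t]
    field_simp
    ring
  have hX2 : 2 * ∑ t ∈ s2, ωstar t * (ω t - ωstar t)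
      + ∑ t ∈ s2, (2 * ((T : ℝ) - 2 * (((t : ℕ) : ℝ))) / ((T : ℝ) - 1)) * (ω t - ωstar t)
      - (2 / ((T:ℝ) - 1)) * ∑ t ∈ s2, (ω t - ωstar t) = 0 := by
    rw [Finset.mul_sum, Finset.mul_sum, ← Finset.sum_add_distrib, ← Finset.sum_sub_distrib]
    apply Finset.sum_eq_zero
    intro t _
    rw [hωstar t]
    field_simp
    ring
  -- key identity
  have hb0 : (2 * ((T : ℝ) - 2 * ((((0 : Fin T) : ℕ)) : ℝ)) / ((T : ℝ) - 1))
      = 2 * (T:ℝ) / ((T:ℝ) - 1) := by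
    norm_num
  have hkey : gCarry1 T ω = gCarry1 T ωstar
      + ((∑ t ∈ s1, (ω t - ωstar t) ^ 2)
          - (1 / ((T:ℝ) - 1)) * (∑ t ∈ s1, (ω t - ωstar t)) ^ 2)
      + ((∑ t ∈ s2, (ω t - ωstar t) ^ 2)
          - (1 / ((T:ℝ) - 1)) * (∑ t ∈ s2, (ω t - ωstar t)) ^ 2)
      + (2 * (T:ℝ) / ((T:ℝ) - 1)) * (ω 0 + 1) := by
    rw [hg ω, hg ωstar]
    rw [expand_sq s1, expand_sq s2, expand_sum s1, expand_sum s2, hA1, hA2,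
      expand_lin s1 _, hsplit (fun t => (2 * ((T : ℝ) - 2 * (((t : ℕ) : ℝ))) / ((T : ℝ) - 1)) * ω t),
      hsplit (fun t => (2 * ((T : ℝ) - 2 * (((t : ℕ) : ℝ))) / ((T : ℝ) - 1)) * ωstar t),
      expand_lin s2 _]
    rw [hb0, hstar0]
    linear_combination hX1 + hX2
  -- Cauchy–Schwarz bounds
  have cs : ∀ s : Finset (Fin T), (s.card : ℝ) = (T:ℝ) - 1 →
      0 ≤ (∑ t ∈ s, (ω t - ωstar t) ^ 2)
        - (1 / ((T:ℝ) - 1)) * (∑ t ∈ s, (ω t - ωstar t)) ^ 2 := by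
    intro s hcs
    have h := sq_sum_le_card_mul_sum_sq (s := s) (f := fun t => ω t - ωstar t)
    rw [hcs] at h
    rw [sub_nonneg, div_mul_eq_mul_div, div_le_iff₀ hn0, one_mul]
    linarith
  have h0 : 0 ≤ (2 * (T:ℝ) / ((T:ℝ) - 1)) * (ω 0 + 1) := by
    have := (hωb 0).1
    have h2 : 0 ≤ 2 * (T:ℝ) / ((T:ℝ) - 1) := by positivity
    nlinarith
  have q1 := cs s1 hcard1
  have q2 := cs s2 hcard2
  linarith [hkey, q1, q2, h0]
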